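/- The sharp-interface liquid-gas surface tension of a planar interface, γ^{SIA}_{lg,∞} := −((n_l − n_g)²/2) ∫_{−∞}^0 ∫_0^∞ φ_attr-planar(|z−z'|) dz' dz with planar kernel Φ_Pla, equals (3/4)π (n_l − n_g)², i.e. −(1/2)∫_{−∞}^0 ∫_0^∞ Φ_Pla(|z−z'|) dz' dz = 3π/4. -/

import Mathlib

open MeasureTheory Set Real

noncomputable def Fpl : ℝ → ℝ := fun t =>
  if t ≤ 1 then -(6 * Real.pi / 5) else 4 * Real.pi * (1 / (5 * t ^ 10) - 1 / (2 * t ^ 4))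

noncomputable def PsiPl : ℝ → ℝ := fun a =>
  if a ≤ 1 then (6 * Real.pi / 5) * a - 16 * Real.pi / 9
  else (4 * Real.pi / 45) * a ^ (-9 : ℝ) - (2 * Real.pi / 3) * a ^ (-3 : ℝ)

lemma setint_shift (f : ℝ → ℝ) (a c : ℝ) :
    ∫ x in Ioi a, f (x + c) = ∫ x in Ioi (a + c), f x := by
  rw [← integral_indicator measurableSet_Ioi, ← integral_indicator measurableSet_Ioi]
  have h : ∀ x, (Ioi a).indicator (fun x => f (x + c)) x = (Ioi (a + c)).indicator f (x + c) := by
    intro x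
    by_cases hx : x ∈ Ioi a
    · rw [indicator_of_mem hx, indicator_of_mem (by simpa using add_lt_add_right hx c)]
    · rw [indicator_of_notMem hx, indicator_of_notMem (by simpa using hx)]
  simp_rw [h]
  exact integral_add_right_eq_self ((Ioi (a + c)).indicator f) c

lemma Fpl_eq_on_tail {a : ℝ} (ha : 1 ≤ a) :
    EqOn Fpl (fun t => (4 * Real.pi / 5) * t ^ (-10 : ℝ) - 2 * Real.pi * t ^ (-4 : ℝ)) (Ioi a) := by
  intro t ht
  have ht1 : 1 < t := lt_of_le_of_lt ha ht
  have ht0 : (0 : ℝ) < t := lt_trans one_pos ht1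
  have h10 : t ^ (-10 : ℝ) = (t ^ 10)⁻¹ := by
    rw [show (-10 : ℝ) = -(10 : ℕ) by norm_num, Real.rpow_neg ht0.le, Real.rpow_natCast]
  have h4 : t ^ (-4 : ℝ) = (t ^ 4)⁻¹ := by
    rw [show (-4 : ℝ) = -(4 : ℕ) by norm_num, Real.rpow_neg ht0.le, Real.rpow_natCast]
  simp only [Fpl, if_neg (not_le.mpr ht1), h10, h4]
  field_simp
  ring

lemma tail_integrable {a : ℝ} (ha : 1 ≤ a) : IntegrableOn Fpl (Ioi a) := by
  have h0 : (0:ℝ) < a := lt_of_lt_of_le one_pos ha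
  refine IntegrableOn.congr_fun (Integrable.sub ?_ ?_)
    (fun x hx => (Fpl_eq_on_tail ha hx).symm) measurableSet_Ioi
  · exact (integrableOn_Ioi_rpow_of_lt (by norm_num) h0).const_mul _
  · exact (integrableOn_Ioi_rpow_of_lt (by norm_num) h0).const_mul _

lemma tail_integral {a : ℝ} (ha : 1 ≤ a) :
    ∫ t in Ioi a, Fpl t = (4 * Real.pi / 45) * a ^ (-9 : ℝ) - (2 * Real.pi / 3) * a ^ (-3 : ℝ) := by
  have h0 : (0:ℝ) < a := lt_of_lt_of_le one_pos ha
  rw [setIntegral_congr_fun measurableSet_Ioi (Fpl_eq_on_tail ha)]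
  rw [integral_sub (((integrableOn_Ioi_rpow_of_lt (by norm_num) h0).const_mul _))
      (((integrableOn_Ioi_rpow_of_lt (by norm_num) h0).const_mul _))]
  rw [integral_const_mul, integral_const_mul, integral_Ioi_rpow_of_lt (by norm_num) h0,
      integral_Ioi_rpow_of_lt (by norm_num) h0]
  norm_num
  ring

lemma inner_val {a : ℝ} (ha : 0 < a) : ∫ t in Ioi a, Fpl t = PsiPl a := by
  by_cases h1 : a ≤ 1
  · have hsplit : Ioc a 1 ∪ Ioi 1 = Ioi a := Ioc_union_Ioi_eq_Ioi h1
    have hconst : EqOn Fpl (fun _ => -(6 * Real.pi / 5)) (Ioc a 1) := fun t ht => by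
      simp only [Fpl, if_pos ht.2]
    have hIoc : IntegrableOn Fpl (Ioc a 1) :=
      IntegrableOn.congr_fun (integrableOn_const measure_Ioc_lt_top.ne)
        (fun x hx => (hconst hx).symm) measurableSet_Ioc
    rw [← hsplit, setIntegral_union Ioc_disjoint_Ioi_same measurableSet_Ioi hIoc
        (tail_integrable le_rfl)]
    rw [setIntegral_congr_fun measurableSet_Ioc hconst, setIntegral_const,
      tail_integral le_rfl, measureReal_def, Real.volume_Ioc]
    rw [ENNReal.toReal_ofReal (by linarith), smul_eq_mul]
    simp only [PsiPl, if_pos h1, Real.one_rpow, smul_eq_mul]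
    ring
  · rw [tail_integral (le_of_not_ge h1), PsiPl, if_neg h1]

lemma psi_int : ∫ a in Ioi (0:ℝ), PsiPl a = -(3 * Real.pi / 2) := by
  have hsplit : Ioc (0:ℝ) 1 ∪ Ioi 1 = Ioi 0 := Ioc_union_Ioi_eq_Ioi zero_le_one
  have haff : EqOn PsiPl (fun a => (6 * Real.pi / 5) * a - 16 * Real.pi / 9) (Ioc (0:ℝ) 1) :=
    fun a ha => by simp only [PsiPl, if_pos ha.2]
  have htail : EqOn PsiPl
      (fun a => (4 * Real.pi / 45) * a ^ (-9 : ℝ) - (2 * Real.pi / 3) * a ^ (-3 : ℝ)) (Ioi 1) :=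
    fun a ha => by simp only [PsiPl, if_neg (not_le.mpr (mem_Ioi.mp ha))]
  have hIoc : IntegrableOn PsiPl (Ioc (0:ℝ) 1) := by
    refine IntegrableOn.congr_fun ?_ (fun x hx => (haff hx).symm) measurableSet_Ioc
    exact ((continuous_const.mul continuous_id).sub continuous_const).integrableOn_Ioc
  have hIoi : IntegrableOn PsiPl (Ioi (1:ℝ)) := by
    refine IntegrableOn.congr_fun (Integrable.sub ?_ ?_)
      (fun x hx => (htail hx).symm) measurableSet_Ioi
    · exact (integrableOn_Ioi_rpow_of_lt (by norm_num) one_pos).const_mul _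
    · exact (integrableOn_Ioi_rpow_of_lt (by norm_num) one_pos).const_mul _
  rw [← hsplit, setIntegral_union Ioc_disjoint_Ioi_same measurableSet_Ioi hIoc hIoi]
  have h1 : ∫ a in Ioc (0:ℝ) 1, PsiPl a = 3 * Real.pi / 5 - 16 * Real.pi / 9 := by
    rw [setIntegral_congr_fun measurableSet_Ioc haff,
      ← intervalIntegral.integral_of_le zero_le_one]
    have : IntervalIntegrable (fun a : ℝ => (6 * Real.pi / 5) * a) volume 0 1 :=
      (continuous_const.mul continuous_id).intervalIntegrable 0 1
    rw [intervalIntegral.integral_sub this (intervalIntegrable_const),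
      intervalIntegral.integral_const_mul, integral_id, intervalIntegral.integral_const]
    norm_num
    ring
  have h2 : ∫ a in Ioi (1:ℝ), PsiPl a = Real.pi / 90 - Real.pi / 3 := by
    rw [setIntegral_congr_fun measurableSet_Ioi htail,
      integral_sub ((integrableOn_Ioi_rpow_of_lt (by norm_num) one_pos).const_mul _)
        ((integrableOn_Ioi_rpow_of_lt (by norm_num) one_pos).const_mul _),
      integral_const_mul, integral_const_mul, integral_Ioi_rpow_of_lt (by norm_num) one_pos,
      integral_Ioi_rpow_of_lt (by norm_num) one_pos]
    norm_num
    ring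
  rw [h1, h2]; ring

lemma key_integral :
    (∫ z in Set.Iio (0 : ℝ), ∫ z' in Set.Ioi (0 : ℝ), Fpl |z - z'|) = -(3 * Real.pi / 2) := by
  have hin : EqOn (fun z => ∫ z' in Set.Ioi (0 : ℝ), Fpl |z - z'|)
      (fun z => PsiPl (-z)) (Iio (0:ℝ)) := by
    intro z hz
    have hz0 : z < 0 := hz
    have h1 : EqOn (fun z' => Fpl |z - z'|) (fun z' => Fpl (z' + -z)) (Ioi (0:ℝ)) := by
      intro z' hz'
      have : z - z' < 0 := by simp only [mem_Ioi] at hz'; linarith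
      simp only [abs_of_neg this]; ring_nf
    calc (∫ z' in Set.Ioi (0 : ℝ), Fpl |z - z'|)
        = ∫ z' in Set.Ioi (0:ℝ), Fpl (z' + -z) :=
          setIntegral_congr_fun measurableSet_Ioi h1
      _ = ∫ u in Set.Ioi (0 + -z), Fpl u := setint_shift Fpl 0 (-z)
      _ = PsiPl (-z) := by rw [zero_add]; exact inner_val (by linarith)
  rw [setIntegral_congr_fun measurableSet_Iio hin,
    ← integral_Iic_eq_integral_Iio, integral_comp_neg_Iic, neg_zero, psi_int]

theorem gamma_lg_SIA (Φ : ℝ → ℝ)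
    (hΦ : ∀ t, Φ t = if t ≤ 1 then -(6 * Real.pi / 5)
        else 4 * Real.pi * (1 / (5 * t ^ 10) - 1 / (2 * t ^ 4)))
    (nl ng : ℝ) :
    (-(1 / 2) * ∫ z in Set.Iio (0 : ℝ), ∫ z' in Set.Ioi (0 : ℝ), Φ |z - z'|)
        = 3 * Real.pi / 4 ∧
    (-((nl - ng) ^ 2 / 2) * ∫ z in Set.Iio (0 : ℝ), ∫ z' in Set.Ioi (0 : ℝ), Φ |z - z'|)
        = (3 / 4) * Real.pi * (nl - ng) ^ 2 := by
  have hF : Φ = Fpl := funext fun t => by rw [hΦ t]; rfl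
  rw [hF, key_integral]
  constructor <;> ring
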